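/- For every rational number q, |√2 − q| ≥ 1/(3·(den q)²), where den q is the denominator of q in lowest terms. -/

import Mathlib

theorem stmt_2 (q : ℚ) : |Real.sqrt 2 - (q : ℝ)| ≥ 1 / (3 * (q.den : ℝ) ^ 2) := by
  have hs : Real.sqrt 2 ^ 2 = 2 := Real.sq_sqrt (by norm_num)
  have hs0 : (0:ℝ) ≤ Real.sqrt 2 := Real.sqrt_nonneg 2
  have hs1 : (1.41 : ℝ) < Real.sqrt 2 := by nlinarith
  have hs2 : Real.sqrt 2 < 1.42 := by nlinarith
  have hd0 : (0:ℝ) < (q.den : ℝ) := by exact_mod_cast q.pos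
  have hqr : (q:ℝ) = (q.num:ℝ)/(q.den:ℝ) := by
    rw [Rat.cast_def]
  have hne : (2 : ℤ) * (q.den:ℤ)^2 ≠ q.num^2 := by
    intro h
    apply irrational_sqrt_two
    refine ⟨|q|, ?_⟩
    have hq2 : (q:ℝ)^2 = 2 := by
      rw [hqr]
      field_simp
      exact_mod_cast (h.symm.trans (mul_comm _ _))
    rw [Rat.cast_abs, ← Real.sqrt_sq_eq_abs, hq2]
  have h1 : (1:ℤ) ≤ |2*(q.den:ℤ)^2 - q.num^2| :=
    Int.one_le_abs (sub_ne_zero.mpr hne)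
  have hrep : 2 - (q:ℝ)^2 = ((2*(q.den:ℤ)^2 - q.num^2 : ℤ) : ℝ)/(q.den:ℝ)^2 := by
    rw [hqr]
    push_cast
    field_simp
  have key : |2 - (q:ℝ)^2| ≥ 1/(q.den:ℝ)^2 := by
    rw [hrep, abs_div, abs_of_pos (by positivity : (0:ℝ) < (q.den:ℝ)^2)]
    apply div_le_div_of_nonneg_right ?_ (by positivity)
    exact_mod_cast h1
  have hmul : (Real.sqrt 2 - (q:ℝ)) * (Real.sqrt 2 + (q:ℝ)) = 2 - (q:ℝ)^2 := by
    nlinarith [hs]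
  have hfac : |Real.sqrt 2 - q| * |Real.sqrt 2 + q| = |2 - (q:ℝ)^2| := by
    rw [← abs_mul, hmul]
  by_contra hcon
  push_neg at hcon
  have hAnn : (0:ℝ) ≤ |Real.sqrt 2 - q| := abs_nonneg _
  have hBnn : (0:ℝ) ≤ |Real.sqrt 2 + q| := abs_nonneg _
  rcases eq_or_lt_of_le (show 1 ≤ q.den from q.pos) with hd1 | hd2
  · -- den = 1, q is an integer
    have hd1' : (q.den : ℝ) = 1 := by exact_mod_cast hd1.symm
    have hq : (q:ℝ) = (q.num:ℝ) := by rw [hqr, hd1']; simp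
    rw [hq, hd1'] at hcon
    have habs := abs_lt.mp (by linarith [hcon] : |Real.sqrt 2 - (q.num:ℝ)| < 1/3)
    have hlo : (1:ℝ) < (q.num:ℝ) := by linarith [habs.1, habs.2]
    have hhi : (q.num:ℝ) < 2 := by linarith [habs.1, habs.2]
    have hlo' : (1:ℤ) < q.num := by exact_mod_cast hlo
    have hhi' : q.num < 2 := by exact_mod_cast hhi
    omega
  · -- den ≥ 2
    have hd2' : (2:ℝ) ≤ (q.den:ℝ) := by exact_mod_cast hd2
    have hB : |Real.sqrt 2 + q| ≤ 2 * Real.sqrt 2 + |Real.sqrt 2 - q| := by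
      have : Real.sqrt 2 + (q:ℝ) = 2 * Real.sqrt 2 - (Real.sqrt 2 - q) := by ring
      rw [this]
      calc |2 * Real.sqrt 2 - (Real.sqrt 2 - (q:ℝ))| ≤ |2 * Real.sqrt 2| + |Real.sqrt 2 - (q:ℝ)| :=
            abs_sub _ _
        _ = 2 * Real.sqrt 2 + |Real.sqrt 2 - (q:ℝ)| := by rw [abs_of_nonneg (by linarith)]
    have hd4 : (4:ℝ) ≤ (q.den:ℝ)^2 := by nlinarith
    have hA : |Real.sqrt 2 - q| < 1 / (3 * (q.den:ℝ)^2) := hcon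
    have hsmall : |Real.sqrt 2 - q| < 1/12 := by
      apply lt_of_lt_of_le hA
      rw [div_le_div_iff₀ (by positivity) (by norm_num)]
      nlinarith
    have h3 : 1/(q.den:ℝ)^2 ≤ |Real.sqrt 2 - q| * |Real.sqrt 2 + q| := by
      rw [hfac]; exact key
    have hB3 : |Real.sqrt 2 + q| < 3 := by linarith
    have h4 : |Real.sqrt 2 - q| * |Real.sqrt 2 + q| < (1 / (3*(q.den:ℝ)^2)) * 3 :=
      mul_lt_mul'' hcon hB3 hAnn hBnn
    have h5 : (1 / (3*(q.den:ℝ)^2)) * 3 = 1/(q.den:ℝ)^2 := by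
      field_simp
    linarith
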